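/- arXiv:2306.14482 — 2 statements merged into one kernel-verified Lean document; each statement's English description precedes it below -/
import Mathlib

section
/- Let X = (X₁,X₂,X₃) be a holomorphic null curve on the unit disc 𝔻 (so (X₁')²+(X₂')²+(X₃')² = 0 and X' never vanishes) with X₃(0) = 0 and X₃ not identically zero. Let c = ord₀(X₃) ≥ 1 and l = ord₀(X₁' − iX₂'). Then l ∈ {0, 2c−2} and ord₀(X₁' + iX₂') = 2c − 2 − l. -/
open Complex Filter

/-- `f` has order of vanishing `n` at `0`: `f z = z^n · g z` near `0` with `g` analytic and
nonvanishing at `0`. -/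
def HasOrderAtZero (f : ℂ → ℂ) (n : ℕ) : Prop :=
  ∃ g : ℂ → ℂ, AnalyticAt ℂ g 0 ∧ g 0 ≠ 0 ∧ ∀ᶠ z in nhds (0 : ℂ), f z = z ^ n * g z

lemma haz_analyticAt {f : ℂ → ℂ} {n : ℕ} (h : HasOrderAtZero f n) : AnalyticAt ℂ f 0 := by
  obtain ⟨g, hg, hg0, heq⟩ := h
  exact (((analyticAt_id.pow n).mul hg)).congr (heq.mono fun z h => h.symm)

lemma haz_iff_order {f : ℂ → ℂ} {n : ℕ} (hf : AnalyticAt ℂ f 0) :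
    analyticOrderAt f 0 = n ↔ HasOrderAtZero f n := by
  rw [hf.analyticOrderAt_eq_natCast]
  simp only [HasOrderAtZero, sub_zero, smul_eq_mul]

lemma haz_unique {f : ℂ → ℂ} {m n : ℕ} (hm : HasOrderAtZero f m) (hn : HasOrderAtZero f n) :
    m = n := by
  have hf := haz_analyticAt hm
  have h1 := (haz_iff_order hf).mpr hm
  have h2 := (haz_iff_order hf).mpr hn
  exact_mod_cast h1.symm.trans h2

lemma haz_mul {f g : ℂ → ℂ} {m n : ℕ} (hf : HasOrderAtZero f m) (hg : HasOrderAtZero g n) :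
    HasOrderAtZero (fun z => f z * g z) (m + n) := by
  obtain ⟨u, hu, hu0, hequ⟩ := hf
  obtain ⟨v, hv, hv0, heqv⟩ := hg
  refine ⟨fun z => u z * v z, hu.mul hv, mul_ne_zero hu0 hv0, ?_⟩
  filter_upwards [hequ, heqv] with z h1 h2
  rw [h1, h2, pow_add]; ring

lemma haz_neg {f : ℂ → ℂ} {n : ℕ} (hf : HasOrderAtZero f n) :
    HasOrderAtZero (fun z => -f z) n := by
  obtain ⟨u, hu, hu0, hequ⟩ := hf
  refine ⟨fun z => -u z, hu.neg, neg_ne_zero.mpr hu0, ?_⟩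
  filter_upwards [hequ] with z h1
  rw [h1]; ring

lemma haz_congr {f g : ℂ → ℂ} {n : ℕ} (hf : HasOrderAtZero f n) (h : f =ᶠ[nhds (0:ℂ)] g) :
    HasOrderAtZero g n := by
  obtain ⟨u, hu, hu0, hequ⟩ := hf
  exact ⟨u, hu, hu0, (h.symm.trans hequ : _)⟩

lemma haz_deriv {f : ℂ → ℂ} {c : ℕ} (hc1 : 1 ≤ c) (hf : HasOrderAtZero f c) :
    HasOrderAtZero (deriv f) (c - 1) := by
  obtain ⟨k, rfl⟩ : ∃ k, c = k + 1 := ⟨c - 1, by omega⟩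
  simp only [Nat.add_sub_cancel]
  obtain ⟨g, hg, hg0, heq⟩ := hf
  refine ⟨fun z => ((k : ℂ) + 1) * g z + z * deriv g z, ?_, ?_, ?_⟩
  · obtain ⟨s, hs_mem, hs⟩ := Filter.eventually_iff_exists_mem.mp hg.eventually_analyticAt
    have hdg : AnalyticAt ℂ (deriv g) 0 :=
      (AnalyticOnNhd.deriv (fun z hz => hs z hz)) 0 (mem_of_mem_nhds hs_mem)
    exact (analyticAt_const.mul hg).add (analyticAt_id.mul hdg)
  · simp only [mul_zero, zero_mul, add_zero]
    exact mul_ne_zero (by exact_mod_cast Nat.succ_ne_zero k) hg0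
  · have heq' : f =ᶠ[nhds (0:ℂ)] (fun z => z ^ (k + 1) * g z) := heq
    have hder := heq'.deriv
    have hga : ∀ᶠ z in nhds (0:ℂ), AnalyticAt ℂ g z := hg.eventually_analyticAt
    filter_upwards [hder, hga] with z h1 h2
    have hd : DifferentiableAt ℂ g z := h2.differentiableAt
    rw [h1, deriv_fun_mul (differentiableAt_pow (k + 1)) hd,
      deriv_fun_pow (f := fun x => x) differentiableAt_fun_id, deriv_id'']
    simp only [Nat.add_sub_cancel, Nat.cast_add, Nat.cast_one, pow_succ]
    ring

theorem stmt14 (X₁ X₂ X₃ : ℂ → ℂ)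
    (hX₁ : DifferentiableOn ℂ X₁ (Metric.ball (0 : ℂ) 1))
    (hX₂ : DifferentiableOn ℂ X₂ (Metric.ball (0 : ℂ) 1))
    (hX₃ : DifferentiableOn ℂ X₃ (Metric.ball (0 : ℂ) 1))
    (hnull : ∀ z ∈ Metric.ball (0 : ℂ) 1,
      deriv X₁ z ^ 2 + deriv X₂ z ^ 2 + deriv X₃ z ^ 2 = 0)
    (himm : ∀ z ∈ Metric.ball (0 : ℂ) 1,
      ¬(deriv X₁ z = 0 ∧ deriv X₂ z = 0 ∧ deriv X₃ z = 0))
    (hzero : X₃ 0 = 0)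
    (c l : ℕ) (hc1 : 1 ≤ c)
    (hc : HasOrderAtZero X₃ c)
    (hl : HasOrderAtZero (fun z => deriv X₁ z - I * deriv X₂ z) l) :
    (l = 0 ∨ l = 2 * c - 2) ∧
    HasOrderAtZero (fun z => deriv X₁ z + I * deriv X₂ z) (2 * c - 2 - l) := by
  set f : ℂ → ℂ := fun z => deriv X₁ z - I * deriv X₂ z with hf_def
  set g : ℂ → ℂ := fun z => deriv X₁ z + I * deriv X₂ z with hg_def
  have hball : Metric.ball (0 : ℂ) 1 ∈ nhds (0 : ℂ) :=
    Metric.ball_mem_nhds 0 one_pos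
  have h0mem : (0 : ℂ) ∈ Metric.ball (0 : ℂ) 1 := Metric.mem_ball_self one_pos
  -- f * g = -(deriv X₃)^2 near 0
  have hfg : (fun z => f z * g z) =ᶠ[nhds (0:ℂ)] (fun z => -(deriv X₃ z) ^ 2) := by
    filter_upwards [hball] with z hz
    have := hnull z hz
    simp only [hf_def, hg_def]
    have : deriv X₁ z ^ 2 + deriv X₂ z ^ 2 = -(deriv X₃ z ^ 2) := by linear_combination this
    calc (deriv X₁ z - I * deriv X₂ z) * (deriv X₁ z + I * deriv X₂ z)
        = deriv X₁ z ^ 2 + deriv X₂ z ^ 2 := by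
          linear_combination (-(deriv X₂ z)^2) * Complex.I_sq
      _ = -(deriv X₃ z ^ 2) := this
  -- order of -(deriv X₃)^2 is (c-1)+(c-1)
  have hd3 : HasOrderAtZero (deriv X₃) (c - 1) := haz_deriv hc1 hc
  have hsq : HasOrderAtZero (fun z => -(deriv X₃ z) ^ 2) ((c - 1) + (c - 1)) := by
    have := haz_neg (haz_mul hd3 hd3)
    refine haz_congr this ?_
    filter_upwards with z; ring
  have hfg_ord : HasOrderAtZero (fun z => f z * g z) ((c - 1) + (c - 1)) :=
    haz_congr hsq hfg.symm
  -- g is analytic at 0 and has some finite order m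
  have hanX₁ : AnalyticOnNhd ℂ (deriv X₁) (Metric.ball (0 : ℂ) 1) :=
    (hX₁.analyticOnNhd Metric.isOpen_ball).deriv
  have hanX₂ : AnalyticOnNhd ℂ (deriv X₂) (Metric.ball (0 : ℂ) 1) :=
    (hX₂.analyticOnNhd Metric.isOpen_ball).deriv
  have hg_an : AnalyticAt ℂ g 0 :=
    (hanX₁ 0 h0mem).add (analyticAt_const.mul (hanX₂ 0 h0mem))
  have hg_ne_top : analyticOrderAt g 0 ≠ ⊤ := by
    intro htop
    rw [analyticOrderAt_eq_top] at htop
    obtain ⟨u, hu, hu0, hequ⟩ := hfg_ord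
    -- then f*g = 0 eventually, so z^N * u z = 0 eventually
    have h1 : ∀ᶠ z in nhds (0:ℂ), z ^ ((c-1)+(c-1)) * u z = 0 := by
      filter_upwards [htop, hequ] with z h2 h3
      rw [← h3, h2, mul_zero]
    have h2 : ∀ᶠ z in nhds (0:ℂ), u z ≠ 0 := hu.continuousAt.eventually_ne hu0
    have h3 : ∀ᶠ z in nhdsWithin (0:ℂ) {(0:ℂ)}ᶜ, False := by
      filter_upwards [(h1.and h2).filter_mono nhdsWithin_le_nhds,
        self_mem_nhdsWithin] with z hz hz0
      exact hz.2 ((mul_eq_zero.mp hz.1).resolve_left (pow_ne_zero _ hz0))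
    exact absurd (Filter.eventually_false_iff_eq_bot.mp h3)
      (NeBot.ne (by exact inferInstance))
  obtain ⟨m, hm⟩ := WithTop.ne_top_iff_exists.mp hg_ne_top
  have hg_ord : HasOrderAtZero g m := (haz_iff_order hg_an).mp hm.symm
  -- l + m = (c-1)+(c-1)
  have hsum : l + m = (c - 1) + (c - 1) := haz_unique (haz_mul hl hg_ord) hfg_ord
  -- dichotomy
  by_cases hl0 : l = 0
  · refine ⟨Or.inl hl0, ?_⟩
    have : m = 2 * c - 2 - l := by omega
    exact this ▸ hg_ord
  · -- show m = 0
    have hm0 : m = 0 := by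
      by_contra hm0
      -- f 0 = 0 and g 0 = 0
      obtain ⟨u, hu, hu0, hequ⟩ := hl
      obtain ⟨v, hv, hv0, heqv⟩ := hg_ord
      have hf0 : deriv X₁ 0 - I * deriv X₂ 0 = 0 := by
        have := hequ.self_of_nhds
        simpa [zero_pow hl0] using this
      have hg0 : deriv X₁ 0 + I * deriv X₂ 0 = 0 := by
        have := heqv.self_of_nhds
        simpa [zero_pow hm0] using this
      have hX₁0 : deriv X₁ 0 = 0 := by linear_combination hf0 / 2 + hg0 / 2
      have hX₂0 : deriv X₂ 0 = 0 := by
        linear_combination (-I/2) * hg0 + (I/2) * hf0 + (deriv X₂ 0) * Complex.I_sq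
      have hX₃0 : deriv X₃ 0 = 0 := by
        have h0 := hnull 0 h0mem
        rw [hX₁0, hX₂0] at h0
        have h2 : deriv X₃ 0 ^ 2 = 0 := by simpa using h0
        exact pow_eq_zero_iff two_ne_zero |>.mp h2
      exact himm 0 h0mem ⟨hX₁0, hX₂0, hX₃0⟩
    refine ⟨Or.inr (by omega), ?_⟩
    have : m = 2 * c - 2 - l := by omega
    exact this ▸ hg_ord
end

section
/- For the matrix-valued map F = 𝒯 ∘ X where X = (X₁,X₂,X₃) : 𝔻* → ℂ²×ℂ* is holomorphic, the entries S of F'F⁻¹ satisfy S₁₂ = (X₁' + iX₂')/X₃², S₁₁ = −S₂₂ = −X₃'/X₃ − (X₁−iX₂)(X₁'+iX₂')/X₃², and S₂₁ = (X₁'−iX₂') − (X₁−iX₂)²(X₁'+iX₂')/X₃² − 2(X₁−iX₂)X₃'/X₃. -/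
open Complex Matrix


private lemma aux1 (a b c a' b' c' : ℂ) (hc : c ≠ 0) :
    (-c' / c ^ 2) * (-(c⁻¹ * (a + I * b))) + ((-c' / c ^ 2) * (a + I * b) + c⁻¹ * (a' + I * b')) * c⁻¹
      = (a' + I * b') / c ^ 2 := by
  field_simp
  ring

private lemma aux2 (a b c a' b' c' : ℂ) (hc : c ≠ 0) :
    (-c' / c ^ 2) * (c⁻¹ * (a ^ 2 + b ^ 2 + c ^ 2))
      + ((-c' / c ^ 2) * (a + I * b) + c⁻¹ * (a' + I * b')) * (-(c⁻¹ * (a - I * b)))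
      = -c' / c - (a - I * b) * (a' + I * b') / c ^ 2 := by
  field_simp
  try rw [div_eq_iff (by field_simp)]
  try ring_nf
  try simp only [Complex.I_sq, show (I : ℂ) ^ 3 = -I by rw [pow_succ, Complex.I_sq]; ring]
  try ring

private lemma aux3 (a b c a' b' c' : ℂ) (hc : c ≠ 0) :
    (-c' / c ^ 2 * (a - I * b) + c⁻¹ * (a' - I * b')) * (c⁻¹ * (a ^ 2 + b ^ 2 + c ^ 2))
      + (-c' / c ^ 2 * (a ^ 2 + b ^ 2 + c ^ 2) + c⁻¹ * (2 * a * a' + 2 * b * b' + 2 * c * c'))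
          * (-(c⁻¹ * (a - I * b)))
      = (a' - I * b') - (a - I * b) ^ 2 * (a' + I * b') / c ^ 2
          - 2 * (a - I * b) * c' / c := by
  field_simp
  try rw [div_eq_iff (by field_simp)]
  try ring_nf
  try simp only [Complex.I_sq, show (I : ℂ) ^ 3 = -I by rw [pow_succ, Complex.I_sq]; ring]
  try ring

private lemma aux4 (a b c a' b' c' : ℂ) (hc : c ≠ 0) :
    (-c' / c ^ 2 * (a - I * b) + c⁻¹ * (a' - I * b')) * (-(c⁻¹ * (a + I * b)))
      + (-c' / c ^ 2 * (a ^ 2 + b ^ 2 + c ^ 2) + c⁻¹ * (2 * a * a' + 2 * b * b' + 2 * c * c')) * c⁻¹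
      = -(-c' / c - (a - I * b) * (a' + I * b') / c ^ 2) := by
  field_simp
  try rw [div_eq_iff (by field_simp)]
  try ring_nf
  try simp only [Complex.I_sq, show (I : ℂ) ^ 3 = -I by rw [pow_succ, Complex.I_sq]; ring]
  try ring

theorem stmt16 (X₁ X₂ X₃ : ℂ → ℂ)
    (Ω : Set ℂ) (hΩ : Ω = Metric.ball (0 : ℂ) 1 \ {0})
    (hX₁ : DifferentiableOn ℂ X₁ Ω) (hX₂ : DifferentiableOn ℂ X₂ Ω)
    (hX₃ : DifferentiableOn ℂ X₃ Ω)
    (hX₃ne : ∀ z ∈ Ω, X₃ z ≠ 0)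
    (F : ℂ → Matrix (Fin 2) (Fin 2) ℂ)
    (hF : ∀ z, F z = (X₃ z)⁻¹ •
      !![(1 : ℂ), X₁ z + I * X₂ z; X₁ z - I * X₂ z, X₁ z ^ 2 + X₂ z ^ 2 + X₃ z ^ 2])
    (S : ℂ → Matrix (Fin 2) (Fin 2) ℂ)
    (hS : ∀ z, S z = (Matrix.of fun i j => deriv (fun w => F w i j) z) * (F z)⁻¹) :
    ∀ z ∈ Ω,
      S z 0 1 = (deriv X₁ z + I * deriv X₂ z) / X₃ z ^ 2 ∧
      S z 0 0 = -deriv X₃ z / X₃ z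
        - (X₁ z - I * X₂ z) * (deriv X₁ z + I * deriv X₂ z) / X₃ z ^ 2 ∧
      S z 1 1 = -(S z 0 0) ∧
      S z 1 0 = (deriv X₁ z - I * deriv X₂ z)
        - (X₁ z - I * X₂ z) ^ 2 * (deriv X₁ z + I * deriv X₂ z) / X₃ z ^ 2
        - 2 * (X₁ z - I * X₂ z) * deriv X₃ z / X₃ z := by
  intro z hz
  have hΩo : IsOpen Ω := by
    rw [hΩ]; exact Metric.isOpen_ball.sdiff isClosed_singleton
  have hmem : Ω ∈ nhds z := hΩo.mem_nhds hz
  have hc : X₃ z ≠ 0 := hX₃ne z hz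
  have h1 : HasDerivAt X₁ (deriv X₁ z) z := (hX₁.differentiableAt hmem).hasDerivAt
  have h2 : HasDerivAt X₂ (deriv X₂ z) z := (hX₂.differentiableAt hmem).hasDerivAt
  have h3 : HasDerivAt X₃ (deriv X₃ z) z := (hX₃.differentiableAt hmem).hasDerivAt
  set a := X₁ z with ha
  set b := X₂ z with hb
  set c := X₃ z with hcc
  set a' := deriv X₁ z with ha'
  set b' := deriv X₂ z with hb'
  set c' := deriv X₃ z with hc'
  have hinv : HasDerivAt (fun w => (X₃ w)⁻¹) (-c' / c ^ 2) z := h3.inv hc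
  have E00 : deriv (fun w => F w 0 0) z = -c' / c ^ 2 := by
    have h : (fun w => F w 0 0) = fun w => (X₃ w)⁻¹ := by
      funext w; rw [hF]; simp
    rw [h]; exact hinv.deriv
  have E01 : deriv (fun w => F w 0 1) z
      = -c' / c ^ 2 * (a + I * b) + c⁻¹ * (a' + I * b') := by
    have h : (fun w => F w 0 1) = fun w => (X₃ w)⁻¹ * (X₁ w + I * X₂ w) := by
      funext w; rw [hF]; simp
    rw [h]; exact (hinv.mul (h1.add (h2.const_mul I))).deriv
  have E10 : deriv (fun w => F w 1 0) z
      = -c' / c ^ 2 * (a - I * b) + c⁻¹ * (a' - I * b') := by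
    have h : (fun w => F w 1 0) = fun w => (X₃ w)⁻¹ * (X₁ w - I * X₂ w) := by
      funext w; rw [hF]; simp
    rw [h]; exact (hinv.mul (h1.sub (h2.const_mul I))).deriv
  have E11 : deriv (fun w => F w 1 1) z
      = -c' / c ^ 2 * (a ^ 2 + b ^ 2 + c ^ 2)
        + c⁻¹ * (2 * a * a' + 2 * b * b' + 2 * c * c') := by
    have h : (fun w => F w 1 1)
        = fun w => (X₃ w)⁻¹ * (X₁ w ^ 2 + X₂ w ^ 2 + X₃ w ^ 2) := by
      funext w; rw [hF]; simp
    rw [h]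
    have := (hinv.mul (((h1.pow 2).add (h2.pow 2)).add (h3.pow 2))).deriv
    refine this.trans ?_
    simp only [Pi.add_apply, Pi.pow_apply, ← ha, ← hb, ← hcc, Nat.cast_ofNat,
      show (2:ℕ) - 1 = 1 from rfl, pow_one]
  have hF00 : F z 0 0 = c⁻¹ := by rw [hF]; simp; rfl
  have hF01 : F z 0 1 = c⁻¹ * (a + I * b) := by rw [hF]; simp; rfl
  have hF10 : F z 1 0 = c⁻¹ * (a - I * b) := by rw [hF]; simp; rfl
  have hF11 : F z 1 1 = c⁻¹ * (a ^ 2 + b ^ 2 + c ^ 2) := by rw [hF]; simp; rfl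
  have hdet : (F z).det = 1 := by
    rw [Matrix.det_fin_two, hF00, hF01, hF10, hF11]
    field_simp
    ring_nf
    simp only [Complex.I_sq]
    ring
  have hinvF : (F z)⁻¹ = !![F z 1 1, -(F z 0 1); -(F z 1 0), F z 0 0] := by
    rw [Matrix.inv_def, hdet, Matrix.adjugate_fin_two]
    simp
  have hSz : ∀ i j, S z i j
      = deriv (fun w => F w i 0) z * !![F z 1 1, -(F z 0 1); -(F z 1 0), F z 0 0] 0 j
        + deriv (fun w => F w i 1) z * !![F z 1 1, -(F z 0 1); -(F z 1 0), F z 0 0] 1 j := by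
    intro i j
    rw [hS, hinvF, Matrix.mul_apply, Fin.sum_univ_two]
    rfl
  have hS01 : S z 0 1 = deriv (fun w => F w 0 0) z * (-(F z 0 1))
      + deriv (fun w => F w 0 1) z * F z 0 0 := by
    rw [hS, hinvF, Matrix.mul_apply, Fin.sum_univ_two]; rfl
  have hS00 : S z 0 0 = deriv (fun w => F w 0 0) z * F z 1 1
      + deriv (fun w => F w 0 1) z * (-(F z 1 0)) := by
    rw [hS, hinvF, Matrix.mul_apply, Fin.sum_univ_two]; rfl
  have hS11 : S z 1 1 = deriv (fun w => F w 1 0) z * (-(F z 0 1))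
      + deriv (fun w => F w 1 1) z * F z 0 0 := by
    rw [hS, hinvF, Matrix.mul_apply, Fin.sum_univ_two]; rfl
  have hS10 : S z 1 0 = deriv (fun w => F w 1 0) z * F z 1 1
      + deriv (fun w => F w 1 1) z * (-(F z 1 0)) := by
    rw [hS, hinvF, Matrix.mul_apply, Fin.sum_univ_two]; rfl
  have k1 : S z 0 1 = (a' + I * b') / c ^ 2 := by
    rw [hS01, E00, E01, hF01, hF00]; exact aux1 a b c a' b' c' hc
  have k2 : S z 0 0 = -c' / c - (a - I * b) * (a' + I * b') / c ^ 2 := by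
    rw [hS00, E00, E01, hF11, hF10]; exact aux2 a b c a' b' c' hc
  have k3 : S z 1 1 = -(S z 0 0) := by
    rw [hS11, E10, E11, hF01, hF00, k2]; exact aux4 a b c a' b' c' hc
  have k4 : S z 1 0 = (a' - I * b') - (a - I * b) ^ 2 * (a' + I * b') / c ^ 2
      - 2 * (a - I * b) * c' / c := by
    rw [hS10, E10, E11, hF11, hF10]; exact aux3 a b c a' b' c' hc
  exact ⟨k1, k2, k3, k4⟩
end
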